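/- Let P be the natural unit interval order P_{(3,1,1),5} on [1,5] (relations 1≺3, 1≺4, 1≺5, 2≺5, 3≺5). Then the permutations 53241 and 53412 are connected by a P-Knuth move, but ght_P(53241) = 2 while ght_P(53412) = 3; hence genuine P-height is not invariant under P-Knuth moves for ladder-climbing orders. -/

import Mathlib

/-- a and b are incomparable with respect to the strict relation P. -/
def Incomp (P : ℕ → ℕ → Prop) (a b : ℕ) : Prop :=
  a ≠ b ∧ ¬ P a b ∧ ¬ P b a

/-- The order P_{(3,1,1),5} on [1,5]: 1≺3, 1≺4, 1≺5, 2≺5, 3≺5. -/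
def P311 (a b : ℕ) : Prop :=
  (a = 1 ∧ b = 3) ∨ (a = 1 ∧ b = 4) ∨ (a = 1 ∧ b = 5) ∨ (a = 2 ∧ b = 5) ∨ (a = 3 ∧ b = 5)

/-- A single P-Knuth move on a triple of consecutive letters. -/
def KnuthTriple (P : ℕ → ℕ → Prop) (x y : ℕ × ℕ × ℕ) : Prop :=
  ∃ a b c : ℕ, a < b ∧ b < c ∧ P a c ∧
    ((Incomp P a b ∧ Incomp P b c ∧
        ((x, y) = ((b, c, a), (c, a, b)) ∨ (x, y) = ((c, a, b), (b, c, a)))) ∨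
     (P a b ∧ Incomp P b c ∧
        ((x, y) = ((b, c, a), (b, a, c)) ∨ (x, y) = ((b, a, c), (b, c, a)) ∨
         (x, y) = ((c, b, a), (c, a, b)) ∨ (x, y) = ((c, a, b), (c, b, a)))) ∨
     (Incomp P a b ∧ P b c ∧
        ((x, y) = ((b, c, a), (c, b, a)) ∨ (x, y) = ((c, b, a), (b, c, a)) ∨
         (x, y) = ((a, c, b), (c, a, b)) ∨ (x, y) = ((c, a, b), (a, c, b)))) ∨
     (P a b ∧ P b c ∧
        ((x, y) = ((b, c, a), (b, a, c)) ∨ (x, y) = ((b, a, c), (b, c, a)) ∨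
         (x, y) = ((a, c, b), (c, a, b)) ∨ (x, y) = ((c, a, b), (a, c, b)))))

/-- Two words (lists) are connected by a single P-Knuth move. -/
def KnuthMoveL (P : ℕ → ℕ → Prop) (w w2 : List ℕ) : Prop :=
  ∃ (l1 l2 : List ℕ) (x1 x2 x3 y1 y2 y3 : ℕ),
    w = l1 ++ [x1, x2, x3] ++ l2 ∧ w2 = l1 ++ [y1, y2, y3] ++ l2 ∧
    KnuthTriple P (x1, x2, x3) (y1, y2, y3)

/-- i appears (strictly) before j in the word w. -/
def Before (w : List ℕ) (i j : ℕ) : Prop :=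
  ∃ l1 l2 l3 : List ℕ, w = l1 ++ i :: (l2 ++ j :: l3)

/-- (i,j) is a genuine P-inversion of the word w. -/
def GInv (P : ℕ → ℕ → Prop) (w : List ℕ) (i j : ℕ) : Prop :=
  P j i ∧ Before w i j ∧
  ¬ ∃ ds : List ℕ, (i :: (ds ++ [j])).Sublist w ∧
      (i :: (ds ++ [j])).Chain' (Incomp P)

/-- The word w admits a chain a_1, …, a_k of elements with each (a_i, a_{i+1}) a genuine
P-inversion; the genuine P-height of w is the largest such k. -/
def HasGChain (P : ℕ → ℕ → Prop) (w : List ℕ) (k : ℕ) : Prop :=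
  ∃ a : ℕ → ℕ, ∀ i, 1 ≤ i → i < k → GInv P w (a i) (a (i + 1))

instance instDecP311 : ∀ a b, Decidable (P311 a b) := fun a b =>
  inferInstanceAs (Decidable ((a = 1 ∧ b = 3) ∨ (a = 1 ∧ b = 4) ∨ (a = 1 ∧ b = 5) ∨
    (a = 2 ∧ b = 5) ∨ (a = 3 ∧ b = 5)))

instance instDecIncomp : ∀ a b, Decidable (Incomp P311 a b) := fun a b =>
  inferInstanceAs (Decidable (a ≠ b ∧ ¬ P311 a b ∧ ¬ P311 b a))

/-- A boolean checker for chains of `P311`-incomparable elements. -/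
def chainB : List ℕ → Bool
  | [] => true
  | [_] => true
  | a :: b :: l => (decide (Incomp P311 a b)) && chainB (b :: l)

lemma chainB_iff : ∀ l : List ℕ, chainB l = true ↔ l.Chain' (Incomp P311)
  | [] => by simp [chainB, List.Chain']
  | [a] => by simp [chainB, List.Chain']
  | a :: b :: l => by
    simp only [List.Chain', List.isChain_cons_cons]
    simp [chainB, chainB_iff (b :: l), List.Chain']

lemma getLast?_snoc (l : List ℕ) (j : ℕ) : (l ++ [j]).getLast? = some j := by
  simp [List.getLast?_append]

/-- If no sublist of `w` with head `i`, last `j` is a chain of incomparables, then the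
non-existence clause of `GInv` holds. -/
lemma noChainAux (w : List ℕ) (i j : ℕ)
    (h : ∀ l ∈ w.sublists, l.head? ≠ some i ∨ l.getLast? ≠ some j ∨ chainB l = false) :
    ¬ ∃ ds : List ℕ, (i :: (ds ++ [j])).Sublist w ∧ (i :: (ds ++ [j])).Chain' (Incomp P311) := by
  rintro ⟨ds, hs, hc⟩
  have hm : (i :: (ds ++ [j])) ∈ w.sublists := List.mem_sublists.2 hs
  rcases h _ hm with h1 | h2 | h3
  · exact h1 rfl
  · exact h2 (getLast?_snoc (i :: ds) j)
  · rw [(chainB_iff _).2 hc] at h3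
    exact absurd h3 (by simp)

lemma ginv1_53 : GInv P311 [5, 3, 2, 4, 1] 5 3 := by
  refine ⟨by decide, ⟨[], [], [2, 4, 1], rfl⟩, noChainAux _ _ _ (by decide)⟩

lemma ginv2_53 : GInv P311 [5, 3, 4, 1, 2] 5 3 := by
  refine ⟨by decide, ⟨[], [], [4, 1, 2], rfl⟩, noChainAux _ _ _ (by decide)⟩

lemma ginv2_31 : GInv P311 [5, 3, 4, 1, 2] 3 1 := by
  refine ⟨by decide, ⟨[5], [4], [2], rfl⟩, noChainAux _ _ _ (by decide)⟩

lemma not_ginv1_31 : ¬ GInv P311 [5, 3, 2, 4, 1] 3 1 := by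
  rintro ⟨-, -, h⟩
  exact h ⟨[2], by decide, (chainB_iff _).1 (by decide)⟩

/-- In any genuine inversion (i,j), the pair (j,i) is a relation of P311. -/
lemma ginv_pairs (w : List ℕ) (i j : ℕ) (h : GInv P311 w i j) :
    (j = 1 ∧ i = 3) ∨ (j = 1 ∧ i = 4) ∨ (j = 1 ∧ i = 5) ∨ (j = 2 ∧ i = 5) ∨ (j = 3 ∧ i = 5) :=
  h.1

theorem stmt19 :
    KnuthMoveL P311 [5, 3, 2, 4, 1] [5, 3, 4, 1, 2] ∧
    (HasGChain P311 [5, 3, 2, 4, 1] 2 ∧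
      ∀ k, HasGChain P311 [5, 3, 2, 4, 1] k → k ≤ 2) ∧
    (HasGChain P311 [5, 3, 4, 1, 2] 3 ∧
      ∀ k, HasGChain P311 [5, 3, 4, 1, 2] k → k ≤ 3) := by
  refine ⟨?_, ⟨?_, ?_⟩, ⟨?_, ?_⟩⟩
  · -- the Knuth move, with a = 1, b = 2, c = 4 (case: a ∥ b, b ∥ c)
    exact ⟨[5, 3], [], 2, 4, 1, 4, 1, 2, rfl, rfl,
      1, 2, 4, by norm_num, by norm_num, by decide,
      Or.inl ⟨by decide, by decide, Or.inl rfl⟩⟩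
  · -- chain 5, 3 in 53241
    refine ⟨fun i => if i = 1 then 5 else 3, fun i h1 h2 => ?_⟩
    have : i = 1 := by omega
    subst this
    simpa using ginv1_53
  · -- no chain of length ≥ 3 in 53241
    rintro k ⟨a, ha⟩
    by_contra hk
    push_neg at hk
    have g1 := ha 1 le_rfl (by omega)
    have g2 := ha 2 (by omega) (by omega)
    simp only [Nat.reduceAdd] at g1 g2
    -- from g1, a 2 ∈ {1,2,3}; from g2, a 2 ∈ {3,4,5}; so a 2 = 3
    have h2 : a 2 = 3 := by
      rcases ginv_pairs _ _ _ g1 with ⟨h, -⟩ | ⟨h, -⟩ | ⟨h, -⟩ | ⟨h, -⟩ | ⟨h, -⟩ <;>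
      rcases ginv_pairs _ _ _ g2 with ⟨-, h'⟩ | ⟨-, h'⟩ | ⟨-, h'⟩ | ⟨-, h'⟩ | ⟨-, h'⟩ <;>
        omega
    rw [h2] at g2
    -- then a 3 = 1, so GInv 3 1, contradiction
    have h3 : a 3 = 1 := by
      rcases ginv_pairs _ _ _ g2 with ⟨h, -⟩ | ⟨h, h'⟩ | ⟨h, h'⟩ | ⟨h, h'⟩ | ⟨h, h'⟩ <;> omega
    rw [h3] at g2
    exact not_ginv1_31 g2
  · -- chain 5, 3, 1 in 53412
    refine ⟨fun i => if i = 1 then 5 else if i = 2 then 3 else 1, fun i h1 h2 => ?_⟩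
    interval_cases i
    · simpa using ginv2_53
    · simpa using ginv2_31
  · -- no chain of length ≥ 4 in 53412
    rintro k ⟨a, ha⟩
    by_contra hk
    push_neg at hk
    have g1 := ha 1 le_rfl (by omega)
    have g2 := ha 2 (by omega) (by omega)
    have g3 := ha 3 (by omega) (by omega)
    simp only [Nat.reduceAdd] at g1 g2 g3
    have h2 : a 2 = 3 := by
      rcases ginv_pairs _ _ _ g1 with ⟨h, -⟩ | ⟨h, -⟩ | ⟨h, -⟩ | ⟨h, -⟩ | ⟨h, -⟩ <;>
      rcases ginv_pairs _ _ _ g2 with ⟨-, h'⟩ | ⟨-, h'⟩ | ⟨-, h'⟩ | ⟨-, h'⟩ | ⟨-, h'⟩ <;>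
        omega
    rw [h2] at g2
    have h3 : a 3 = 1 := by
      rcases ginv_pairs _ _ _ g2 with ⟨h, h'⟩ | ⟨h, h'⟩ | ⟨h, h'⟩ | ⟨h, h'⟩ | ⟨h, h'⟩ <;> omega
    rw [h3] at g3
    -- no x with P311 x 1, so GInv (1, a 4) is impossible
    rcases ginv_pairs _ _ _ g3 with ⟨h, h'⟩ | ⟨h, h'⟩ | ⟨h, h'⟩ | ⟨h, h'⟩ | ⟨h, h'⟩ <;> omega
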